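/- arXiv:1705.09644 — 2 statements merged into one kernel-verified Lean document; each statement's English description precedes it below -/
import Mathlib

section
/- Consider the chain X1 → X2 → X3 as above. If only the variance of N1 changes between the two environments (σ1² ≠ σ̃1², b ≠ 0), then the regression coefficient of X2 on X1 is invariant while the regression coefficient of X1 on X2 changes. -/
open MeasureTheory ProbabilityTheory

lemma chain_aux {Ω : Type*} [MeasurableSpace Ω] {μ : Measure Ω} [IsProbabilityMeasure μ]
    {N₁ N₂ : Ω → ℝ} (hL₁ : MemLp N₁ 2 μ) (hL₂ : MemLp N₂ 2 μ)
    (hindep : IndepFun N₁ N₂ μ)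
    (hmean₁ : ∫ ω, N₁ ω ∂μ = 0) (hmean₂ : ∫ ω, N₂ ω ∂μ = 0) (b : ℝ) :
    (∫ ω, N₁ ω * (b * N₁ ω + N₂ ω) ∂μ = b * ∫ ω, (N₁ ω) ^ 2 ∂μ) ∧
    (∫ ω, (b * N₁ ω + N₂ ω) ^ 2 ∂μ
        = b ^ 2 * (∫ ω, (N₁ ω) ^ 2 ∂μ) + ∫ ω, (N₂ ω) ^ 2 ∂μ) := by
  have i1 : Integrable N₁ μ := hL₁.integrable one_le_two
  have i2 : Integrable N₂ μ := hL₂.integrable one_le_two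
  have i11 : Integrable (fun ω => (N₁ ω) ^ 2) μ := by
    simpa [sq] using hL₁.integrable_sq
  have i22 : Integrable (fun ω => (N₂ ω) ^ 2) μ := by
    simpa [sq] using hL₂.integrable_sq
  have i12 : Integrable (fun ω => N₁ ω * N₂ ω) μ := hindep.integrable_mul i1 i2
  have h0 : ∫ ω, N₁ ω * N₂ ω ∂μ = 0 := by
    have := hindep.integral_mul_eq_mul_integral i1.1 i2.1
    simpa [hmean₁, hmean₂] using this
  constructor
  · have : (fun ω => N₁ ω * (b * N₁ ω + N₂ ω))
        = fun ω => b * (N₁ ω) ^ 2 + N₁ ω * N₂ ω := by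
      funext ω; ring
    rw [this, integral_add (i11.const_mul b) i12, integral_const_mul, h0, add_zero]
  · have : (fun ω => (b * N₁ ω + N₂ ω) ^ 2)
        = fun ω => (b ^ 2 * (N₁ ω) ^ 2 + (N₂ ω) ^ 2) + (2 * b) * (N₁ ω * N₂ ω) := by
      funext ω; ring
    have A : Integrable (fun ω => b ^ 2 * (N₁ ω) ^ 2 + (N₂ ω) ^ 2) μ :=
      (i11.const_mul _).add i22
    have B : Integrable (fun ω => (2 * b) * (N₁ ω * N₂ ω)) μ := i12.const_mul _
    rw [this, integral_add A B, integral_add (i11.const_mul _) i22,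
      integral_const_mul, integral_const_mul, h0, mul_zero, add_zero]

/-- Chain `X1 → X2 → X3`: `X1 = N1`, `X2 = b*X1 + N2`, `X3 = c*X2 + N3` with
jointly independent zero-mean noises. If only `Var(N1)` changes between the two environments
(`σ1² ≠ σ̃1²`, `b ≠ 0`, all variances positive), then the regression coefficient of
`X2` on `X1` (i.e. `Cov(X1,X2)/Var(X1)`) is invariant, while the regression coefficient of
`X1` on `X2` (i.e. `Cov(X2,X1)/Var(X2)`) changes. -/
theorem chain_regression_X2_on_X1_invariant_X1_on_X2_varies
    {Ω : Type*} [MeasurableSpace Ω] (μ₁ μ₂ : Measure Ω)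
    [IsProbabilityMeasure μ₁] [IsProbabilityMeasure μ₂]
    (N₁ N₂ N₃ : Ω → ℝ) (b c σ₁sq τ₁sq σ₂sq σ₃sq : ℝ)
    (hmeas₁ : Measurable N₁) (hmeas₂ : Measurable N₂) (hmeas₃ : Measurable N₃)
    (hL : ∀ i, MemLp (![N₁, N₂, N₃] i) 2 μ₁) (hL' : ∀ i, MemLp (![N₁, N₂, N₃] i) 2 μ₂)
    (hindep₁ : iIndepFun ![N₁, N₂, N₃] μ₁)
    (hindep₂ : iIndepFun ![N₁, N₂, N₃] μ₂)
    (hm : ∀ i, ∫ ω, (![N₁, N₂, N₃] i) ω ∂μ₁ = 0)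
    (hm' : ∀ i, ∫ ω, (![N₁, N₂, N₃] i) ω ∂μ₂ = 0)
    (hv₁ : ∫ ω, (N₁ ω) ^ 2 ∂μ₁ = σ₁sq) (hv₁' : ∫ ω, (N₁ ω) ^ 2 ∂μ₂ = τ₁sq)
    (hv₂ : ∫ ω, (N₂ ω) ^ 2 ∂μ₁ = σ₂sq) (hv₂' : ∫ ω, (N₂ ω) ^ 2 ∂μ₂ = σ₂sq)
    (hv₃ : ∫ ω, (N₃ ω) ^ 2 ∂μ₁ = σ₃sq) (hv₃' : ∫ ω, (N₃ ω) ^ 2 ∂μ₂ = σ₃sq)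
    (hσ₁ : 0 < σ₁sq) (hτ₁ : 0 < τ₁sq) (hσ₂ : 0 < σ₂sq) (hσ₃ : 0 < σ₃sq)
    (hne : σ₁sq ≠ τ₁sq) (hb : b ≠ 0)
    (X₁ X₂ X₃ : Ω → ℝ)
    (hX₁ : X₁ = N₁) (hX₂ : X₂ = fun ω => b * X₁ ω + N₂ ω)
    (hX₃ : X₃ = fun ω => c * X₂ ω + N₃ ω) :
    (∫ ω, X₁ ω * X₂ ω ∂μ₁) / (∫ ω, (X₁ ω) ^ 2 ∂μ₁)
        = (∫ ω, X₁ ω * X₂ ω ∂μ₂) / (∫ ω, (X₁ ω) ^ 2 ∂μ₂) ∧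
    (∫ ω, X₂ ω * X₁ ω ∂μ₁) / (∫ ω, (X₂ ω) ^ 2 ∂μ₁)
        ≠ (∫ ω, X₂ ω * X₁ ω ∂μ₂) / (∫ ω, (X₂ ω) ^ 2 ∂μ₂) := by
  simp only [hX₂, hX₁]
  have hL₁ : MemLp N₁ 2 μ₁ := by simpa using hL 0
  have hL₂ : MemLp N₂ 2 μ₁ := by simpa using hL 1
  have hL₁' : MemLp N₁ 2 μ₂ := by simpa using hL' 0
  have hL₂' : MemLp N₂ 2 μ₂ := by simpa using hL' 1
  have hInd₁ : IndepFun N₁ N₂ μ₁ := by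
    simpa using hindep₁.indepFun (i := 0) (j := 1) (by decide)
  have hInd₂ : IndepFun N₁ N₂ μ₂ := by
    simpa using hindep₂.indepFun (i := 0) (j := 1) (by decide)
  have hm₁ : ∫ ω, N₁ ω ∂μ₁ = 0 := by simpa using hm 0
  have hm₂ : ∫ ω, N₂ ω ∂μ₁ = 0 := by simpa using hm 1
  have hm₁' : ∫ ω, N₁ ω ∂μ₂ = 0 := by simpa using hm' 0
  have hm₂' : ∫ ω, N₂ ω ∂μ₂ = 0 := by simpa using hm' 1
  obtain ⟨e1, e2⟩ := chain_aux hL₁ hL₂ hInd₁ hm₁ hm₂ b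
  obtain ⟨f1, f2⟩ := chain_aux hL₁' hL₂' hInd₂ hm₁' hm₂' b
  rw [hv₁] at e1
  rw [hv₁, hv₂] at e2
  rw [hv₁'] at f1
  rw [hv₁', hv₂'] at f2
  constructor
  · rw [e1, f1, hv₁, hv₁', mul_div_assoc, mul_div_assoc,
      div_self hσ₁.ne', div_self hτ₁.ne']
  · have hcomm₁ : ∫ ω, (b * N₁ ω + N₂ ω) * N₁ ω ∂μ₁ = b * σ₁sq := by
      rw [← e1]; congr 1; funext ω; ring
    have hcomm₂ : ∫ ω, (b * N₁ ω + N₂ ω) * N₁ ω ∂μ₂ = b * τ₁sq := by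
      rw [← f1]; congr 1; funext ω; ring
    simp only [hcomm₁, hcomm₂, e2, f2]
    have hd₁ : b ^ 2 * σ₁sq + σ₂sq > 0 := by positivity
    have hd₂ : b ^ 2 * τ₁sq + σ₂sq > 0 := by positivity
    intro h
    rw [div_eq_div_iff hd₁.ne' hd₂.ne'] at h
    apply hne
    have hbσ : b * σ₂sq ≠ 0 := mul_ne_zero hb hσ₂.ne'
    have key : b * σ₂sq * σ₁sq = b * σ₂sq * τ₁sq := by ring_nf; ring_nf at h; linarith
    exact mul_left_cancel₀ hbσ key
end

section
/- Let X = Σ_{k∈K} a_k N_k and Y = Σ_{k∈K} b_k N_k + Σ_{k∈K'} c_k N_k with K, K' disjoint and noises independent zero-mean. If the variance of exactly one noise N_j with j ∈ K changes across two environments while all other variances are fixed, and a_j ≠ 0, and the vectors (a_k)_{k∈K} and (b_k)_{k∈K} are such that b_j·(Σ_{k∈K, k≠j} a_k² v_k) ≠ a_j·(Σ_{k∈K, k≠j} a_k b_k v_k), then β_X(Y) differs between the two environments. -/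
open MeasureTheory ProbabilityTheory

lemma key_integral {Ω : Type*} [MeasurableSpace Ω] (μ : Measure Ω)
    [IsProbabilityMeasure μ] (m : ℕ) (N : Fin m → Ω → ℝ)
    (hmeas : ∀ k, Measurable (N k)) (hL : ∀ k, MemLp (N k) 2 μ)
    (hindep : iIndepFun N μ)
    (hmean : ∀ k, ∫ ω, N k ω ∂μ = 0)
    (K L : Finset (Fin m)) (a d : Fin m → ℝ) :
    ∫ ω, (∑ k ∈ K, a k * N k ω) * (∑ l ∈ L, d l * N l ω) ∂μ
      = ∑ k ∈ K ∩ L, a k * d k * ∫ ω, (N k ω) ^ 2 ∂μ := by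
  have hint : ∀ k l : Fin m, Integrable (fun ω => N k ω * N l ω) μ := by
    intro k l
    rcases eq_or_ne k l with rfl | hkl
    · simpa [pow_two] using (hL k).integrable_sq
    · exact (hindep.indepFun hkl).integrable_mul ((hL k).integrable one_le_two)
        ((hL l).integrable one_le_two)
  have hNN : ∀ k l : Fin m, k ≠ l → ∫ ω, N k ω * N l ω ∂μ = 0 := by
    intro k l hkl
    have h := (hindep.indepFun hkl).integral_mul_eq_mul_integral (hL k).1
        (hL l).1
    rw [show (∫ ω, N k ω * N l ω ∂μ) = ∫ ω, (N k * N l) ω ∂μ from rfl, h, hmean k, zero_mul]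
  have hexp : ∀ ω, (∑ k ∈ K, a k * N k ω) * (∑ l ∈ L, d l * N l ω)
      = ∑ k ∈ K, ∑ l ∈ L, a k * d l * (N k ω * N l ω) := by
    intro ω
    rw [Finset.sum_mul_sum]
    exact Finset.sum_congr rfl fun k _ => Finset.sum_congr rfl fun l _ => by ring
  simp_rw [hexp]
  rw [integral_finset_sum _ fun k _ => integrable_finset_sum _ fun l _ =>
      ((hint k l).const_mul _)]
  have : ∀ k ∈ K, (∫ ω, ∑ l ∈ L, a k * d l * (N k ω * N l ω) ∂μ)
      = if k ∈ L then a k * d k * ∫ ω, (N k ω) ^ 2 ∂μ else 0 := by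
    intro k _
    rw [integral_finset_sum _ fun l _ => ((hint k l).const_mul _)]
    have : ∀ l ∈ L, (∫ ω, a k * d l * (N k ω * N l ω) ∂μ)
        = if l = k then a k * d k * ∫ ω, (N k ω) ^ 2 ∂μ else 0 := by
      intro l _
      rw [integral_const_mul]
      rcases eq_or_ne l k with rfl | hlk
      · simp [pow_two]
      · rw [hNN k l (Ne.symm hlk), if_neg hlk, mul_zero]
    rw [Finset.sum_congr rfl this, Finset.sum_ite_eq' L k]
  rw [Finset.sum_congr rfl this, Finset.sum_ite_mem, Finset.inter_comm]

/-- Let `X = Σ_{k∈K} a_k N_k` and `Y = Σ_{k∈K} b_k N_k + Σ_{k∈K'} c_k N_k`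
with `K, K'` disjoint and jointly independent zero-mean noises. If across two environments
the variance of exactly one noise `N_j` with `j ∈ K` changes (all other variances fixed,
all positive), `a_j ≠ 0`, and the genericity condition
`b_j · Σ_{k∈K, k≠j} a_k² v_k ≠ a_j · Σ_{k∈K, k≠j} a_k b_k v_k` holds, then
`β_X(Y) = Cov(X,Y)/Var(X)` differs between the two environments. -/
theorem regression_varies_when_cause_noise_changes
    {Ω : Type*} [MeasurableSpace Ω] (μ₁ μ₂ : Measure Ω)
    [IsProbabilityMeasure μ₁] [IsProbabilityMeasure μ₂]
    (m : ℕ) (K K' : Finset (Fin m)) (hdisj : Disjoint K K')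
    (N : Fin m → Ω → ℝ) (a b c : Fin m → ℝ) (v₁ v₂ : Fin m → ℝ)
    (j : Fin m) (hj : j ∈ K)
    (hmeas : ∀ k, Measurable (N k))
    (hL₁ : ∀ k, MemLp (N k) 2 μ₁) (hL₂ : ∀ k, MemLp (N k) 2 μ₂)
    (hindep₁ : iIndepFun N μ₁)
    (hindep₂ : iIndepFun N μ₂)
    (hmean₁ : ∀ k, ∫ ω, N k ω ∂μ₁ = 0) (hmean₂ : ∀ k, ∫ ω, N k ω ∂μ₂ = 0)
    (hvar₁ : ∀ k, ∫ ω, (N k ω) ^ 2 ∂μ₁ = v₁ k) (hvar₂ : ∀ k, ∫ ω, (N k ω) ^ 2 ∂μ₂ = v₂ k)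
    (hpos₁ : ∀ k, 0 < v₁ k) (hpos₂ : ∀ k, 0 < v₂ k)
    (hfixed : ∀ k, k ≠ j → v₁ k = v₂ k) (hchange : v₁ j ≠ v₂ j)
    (haj : a j ≠ 0)
    (hgen : b j * (∑ k ∈ K.erase j, (a k) ^ 2 * v₁ k)
              ≠ a j * (∑ k ∈ K.erase j, a k * b k * v₁ k))
    (X Y : Ω → ℝ)
    (hX : X = fun ω => ∑ k ∈ K, a k * N k ω)
    (hY : Y = fun ω => (∑ k ∈ K, b k * N k ω) + ∑ k ∈ K', c k * N k ω) :
    (∫ ω, X ω * Y ω ∂μ₁) / (∫ ω, (X ω) ^ 2 ∂μ₁)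
      ≠ (∫ ω, X ω * Y ω ∂μ₂) / (∫ ω, (X ω) ^ 2 ∂μ₂) := by
  -- rewrite Y as a single sum
  set d : Fin m → ℝ := fun k => if k ∈ K then b k else c k with hd
  have hY' : Y = fun ω => ∑ k ∈ K ∪ K', d k * N k ω := by
    funext ω
    simp only [hY]
    rw [Finset.sum_union hdisj]
    congr 1
    · exact Finset.sum_congr rfl fun k hk => by simp [hd, hk]
    · exact Finset.sum_congr rfl fun k hk => by
        simp [hd, Finset.disjoint_right.mp hdisj hk]
  have hKK : K ∩ K = K := Finset.inter_self K
  have hKU : K ∩ (K ∪ K') = K := Finset.inter_eq_left.mpr Finset.subset_union_left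
  -- the four integrals
  have hXY₁ : (∫ ω, X ω * Y ω ∂μ₁) = ∑ k ∈ K, a k * b k * v₁ k := by
    rw [hX, hY', key_integral μ₁ m N hmeas hL₁ hindep₁ hmean₁, hKU]
    exact Finset.sum_congr rfl fun k hk => by simp [hd, hk, hvar₁ k]
  have hXY₂ : (∫ ω, X ω * Y ω ∂μ₂) = ∑ k ∈ K, a k * b k * v₂ k := by
    rw [hX, hY', key_integral μ₂ m N hmeas hL₂ hindep₂ hmean₂, hKU]
    exact Finset.sum_congr rfl fun k hk => by simp [hd, hk, hvar₂ k]
  have hXX₁ : (∫ ω, (X ω) ^ 2 ∂μ₁) = ∑ k ∈ K, (a k) ^ 2 * v₁ k := by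
    simp_rw [hX, pow_two]
    rw [key_integral μ₁ m N hmeas hL₁ hindep₁ hmean₁, hKK]
    exact Finset.sum_congr rfl fun k _ => by rw [hvar₁ k]
  have hXX₂ : (∫ ω, (X ω) ^ 2 ∂μ₂) = ∑ k ∈ K, (a k) ^ 2 * v₂ k := by
    simp_rw [hX, pow_two]
    rw [key_integral μ₂ m N hmeas hL₂ hindep₂ hmean₂, hKK]
    exact Finset.sum_congr rfl fun k _ => by rw [hvar₂ k]
  rw [hXY₁, hXY₂, hXX₁, hXX₂]
  -- algebra
  set S := ∑ k ∈ K.erase j, (a k) ^ 2 * v₁ k with hS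
  set T := ∑ k ∈ K.erase j, a k * b k * v₁ k with hT
  have hSe : ∑ k ∈ K.erase j, (a k) ^ 2 * v₂ k = S :=
    Finset.sum_congr rfl fun k hk => by
      rw [← hfixed k (Finset.ne_of_mem_erase hk)]
  have hTe : ∑ k ∈ K.erase j, a k * b k * v₂ k = T :=
    Finset.sum_congr rfl fun k hk => by
      rw [← hfixed k (Finset.ne_of_mem_erase hk)]
  have hV₁ : ∑ k ∈ K, (a k) ^ 2 * v₁ k = (a j) ^ 2 * v₁ j + S :=
    (Finset.add_sum_erase K (fun k => (a k) ^ 2 * v₁ k) hj).symm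
  have hV₂ : ∑ k ∈ K, (a k) ^ 2 * v₂ k = (a j) ^ 2 * v₂ j + S := by
    rw [← hSe]
    exact (Finset.add_sum_erase K (fun k => (a k) ^ 2 * v₂ k) hj).symm
  have hC₁ : ∑ k ∈ K, a k * b k * v₁ k = a j * b j * v₁ j + T :=
    (Finset.add_sum_erase K (fun k => a k * b k * v₁ k) hj).symm
  have hC₂ : ∑ k ∈ K, a k * b k * v₂ k = a j * b j * v₂ j + T := by
    rw [← hTe]
    exact (Finset.add_sum_erase K (fun k => a k * b k * v₂ k) hj).symm
  have hSnn : 0 ≤ S :=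
    Finset.sum_nonneg fun k _ => mul_nonneg (sq_nonneg _) (hpos₁ k).le
  have hsq : (0:ℝ) < (a j) ^ 2 :=
    lt_of_le_of_ne (sq_nonneg _) (Ne.symm (pow_ne_zero 2 haj))
  have hV₁pos : (0:ℝ) < (a j) ^ 2 * v₁ j + S := by
    have := mul_pos hsq (hpos₁ j); linarith
  have hV₂pos : (0:ℝ) < (a j) ^ 2 * v₂ j + S := by
    have := mul_pos hsq (hpos₂ j); linarith
  rw [hV₁, hV₂, hC₁, hC₂]
  intro h
  rw [div_eq_div_iff hV₁pos.ne' hV₂pos.ne'] at h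
  have hzero : (v₁ j - v₂ j) * (a j * (b j * S - a j * T)) = 0 := by
    linear_combination h
  rcases mul_eq_zero.mp hzero with h1 | h2
  · exact hchange (sub_eq_zero.mp h1)
  · rcases mul_eq_zero.mp h2 with h3 | h4
    · exact haj h3
    · exact hgen (sub_eq_zero.mp h4)
end
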